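/- Let Σ₁ and Σ₂ be compatible connected signed graphs on m and n vertices with compatible Cartesian product. Then the signed distance matrix satisfies D(Σ₁ × Σ₂) = D(Σ₁) ⊗ (K^{D±}(Σ₂) + I_n) + (K^{D±}(Σ₁) + I_m) ⊗ D(Σ₂), where ⊗ is the Kronecker product. -/

import Mathlib

open SimpleGraph

/-- The sign of a walk: the product of the signs of its edges. -/
def walkSign {V : Type*} {G : SimpleGraph V} (σ : V → V → ℤ) :
    {u v : V} → G.Walk u v → ℤ
  | _, _, SimpleGraph.Walk.nil => 1
  | _, _, @SimpleGraph.Walk.cons _ _ a b _ _ p => σ a b * walkSign σ p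

/-- A walk is a shortest path if its length equals the distance of its endpoints. -/
def IsShortest {V : Type*} {G : SimpleGraph V} {u v : V} (p : G.Walk u v) : Prop :=
  p.length = G.dist u v

/-- A signed graph is compatible if all shortest paths between any two vertices have
the same sign. -/
def Compatible {V : Type*} (G : SimpleGraph V) (σ : V → V → ℤ) : Prop :=
  ∀ (u v : V) (p q : G.Walk u v), IsShortest p → IsShortest q →
    walkSign σ p = walkSign σ q

/-- The signature of the Cartesian product of signed graphs: an edge inherits the sign
from the coordinate in which the move occurs. -/
def boxSign {V₁ V₂ : Type*} (σ₁ : V₁ → V₁ → ℤ) (σ₂ : V₂ → V₂ → ℤ)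
    [DecidableEq V₁] [DecidableEq V₂] : V₁ × V₂ → V₁ × V₂ → ℤ :=
  fun x y => if x.2 = y.2 then σ₁ x.1 y.1 else σ₂ x.2 y.2

open Kronecker Matrix


section Aux
open SimpleGraph

lemma walkSign_append {V : Type*} {G : SimpleGraph V} (σ : V → V → ℤ) {u v w : V}
    (p : G.Walk u v) (q : G.Walk v w) :
    walkSign σ (p.append q) = walkSign σ p * walkSign σ q := by
  induction p with
  | nil => simp [walkSign]
  | cons h p ih => simp [walkSign, ih]; ring

lemma walkSign_boxProdLeft {V₁ V₂ : Type*} [DecidableEq V₁] [DecidableEq V₂]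
    {G₁ : SimpleGraph V₁} (G₂ : SimpleGraph V₂) (σ₁ : V₁ → V₁ → ℤ) (σ₂ : V₂ → V₂ → ℤ)
    {a₁ a₂ : V₁} (b : V₂) (p : G₁.Walk a₁ a₂) :
    walkSign (boxSign σ₁ σ₂) (p.boxProdLeft G₂ b) = walkSign σ₁ p := by
  induction p with
  | nil => rfl
  | cons h p ih =>
    simp only [Walk.boxProdLeft, Walk.map_cons] at *
    simp [walkSign, boxSign, ih]
    exact Or.inl ih

lemma walkSign_boxProdRight {V₁ V₂ : Type*} [DecidableEq V₁] [DecidableEq V₂]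
    (G₁ : SimpleGraph V₁) {G₂ : SimpleGraph V₂} (σ₁ : V₁ → V₁ → ℤ) (σ₂ : V₂ → V₂ → ℤ)
    {b₁ b₂ : V₂} (a : V₁) (p : G₂.Walk b₁ b₂) :
    walkSign (boxSign σ₁ σ₂) (p.boxProdRight G₁ a) = walkSign σ₂ p := by
  induction p with
  | nil => rfl
  | @cons x y z h p ih =>
    simp only [Walk.boxProdRight, Walk.map_cons] at *
    simp [walkSign, boxSign, ih, h.ne]
    exact Or.inl ih

lemma boxProd_dist_le_walk {V₁ V₂ : Type*} {G₁ : SimpleGraph V₁} {G₂ : SimpleGraph V₂}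
    (h₁ : G₁.Connected) (h₂ : G₂.Connected) {x y : V₁ × V₂} (P : (G₁ □ G₂).Walk x y) :
    G₁.dist x.1 y.1 + G₂.dist x.2 y.2 ≤ P.length := by
  induction P with
  | nil => simp
  | @cons x z y h P ih =>
    rw [SimpleGraph.boxProd_adj] at h
    rw [SimpleGraph.Walk.length_cons]
    rcases h with ⟨hadj, heq⟩ | ⟨hadj, heq⟩
    · have h1 : G₁.dist x.1 y.1 ≤ G₁.dist x.1 z.1 + G₁.dist z.1 y.1 := h₁.dist_triangle
      have h2 : G₁.dist x.1 z.1 ≤ 1 := by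
        simpa using SimpleGraph.dist_le hadj.toWalk
      rw [heq]
      omega
    · have h1 : G₂.dist x.2 y.2 ≤ G₂.dist x.2 z.2 + G₂.dist z.2 y.2 := h₂.dist_triangle
      have h2 : G₂.dist x.2 z.2 ≤ 1 := by
        simpa using SimpleGraph.dist_le hadj.toWalk
      rw [heq]
      omega

lemma boxProd_dist {V₁ V₂ : Type*} {G₁ : SimpleGraph V₁} {G₂ : SimpleGraph V₂}
    (h₁ : G₁.Connected) (h₂ : G₂.Connected) (x y : V₁ × V₂) :
    (G₁ □ G₂).dist x y = G₁.dist x.1 y.1 + G₂.dist x.2 y.2 := by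
  obtain ⟨x₁, x₂⟩ := x
  obtain ⟨y₁, y₂⟩ := y
  obtain ⟨p, hp⟩ := h₁.exists_walk_length_eq_dist x₁ y₁
  obtain ⟨q, hq⟩ := h₂.exists_walk_length_eq_dist x₂ y₂
  refine le_antisymm ?_ ?_
  · have := SimpleGraph.dist_le ((p.boxProdLeft G₂ x₂).append (q.boxProdRight G₁ y₁))
    rw [Walk.length_append, show (p.boxProdLeft G₂ x₂).length = p.length from Walk.length_map _ _,
      show (q.boxProdRight G₁ y₁).length = q.length from Walk.length_map _ _] at this
    simpa [Walk.boxProdLeft, Walk.boxProdRight, hp, hq] using this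
  · obtain ⟨P, hP⟩ := (h₁.boxProd h₂).exists_walk_length_eq_dist (x₁, x₂) (y₁, y₂)
    have := boxProd_dist_le_walk h₁ h₂ P
    omega

end Aux

/-- Distance matrix of the Cartesian product of compatible signed graphs:
`D(Σ₁×Σ₂) = D(Σ₁) ⊗ (K^{D±}(Σ₂)+Iₙ) + (K^{D±}(Σ₁)+Iₘ) ⊗ D(Σ₂)`. -/
theorem boxProd_distance_matrix {V₁ V₂ : Type*} [Fintype V₁] [Fintype V₂]
    [DecidableEq V₁] [DecidableEq V₂]
    (G₁ : SimpleGraph V₁) (G₂ : SimpleGraph V₂)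
    (h₁ : G₁.Connected) (h₂ : G₂.Connected)
    (σ₁ : V₁ → V₁ → ℤ) (σ₂ : V₂ → V₂ → ℤ)
    (hσ₁ : ∀ u v : V₁, G₁.Adj u v → σ₁ u v = 1 ∨ σ₁ u v = -1)
    (hσ₂ : ∀ u v : V₂, G₂.Adj u v → σ₂ u v = 1 ∨ σ₂ u v = -1)
    (hsymm₁ : ∀ u v : V₁, σ₁ u v = σ₁ v u) (hsymm₂ : ∀ u v : V₂, σ₂ u v = σ₂ v u)
    -- `Σ₁` and `Σ₂` are compatible, with common shortest-path signs `s₁`, `s₂`: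
    (s₁ : V₁ → V₁ → ℤ) (s₂ : V₂ → V₂ → ℤ)
    (hs₁ : ∀ (u v : V₁) (p : G₁.Walk u v), IsShortest p → walkSign σ₁ p = s₁ u v)
    (hs₂ : ∀ (u v : V₂) (p : G₂.Walk u v), IsShortest p → walkSign σ₂ p = s₂ u v)
    -- the product is compatible, with common shortest-path sign `sP`:
    (sP : V₁ × V₂ → V₁ × V₂ → ℤ)
    (hsP : ∀ (x y : V₁ × V₂) (P : (G₁ □ G₂).Walk x y), IsShortest P →
      walkSign (boxSign σ₁ σ₂) P = sP x y) :
    -- the signed distance matrix of the product: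
    (Matrix.of fun x y : V₁ × V₂ => sP x y * ((G₁ □ G₂).dist x y : ℤ)) =
      (Matrix.of fun u v : V₁ => s₁ u v * (G₁.dist u v : ℤ)) ⊗ₖ
          (Matrix.of fun u v : V₂ => s₂ u v) +
        (Matrix.of fun u v : V₁ => s₁ u v) ⊗ₖ
          (Matrix.of fun u v : V₂ => s₂ u v * (G₂.dist u v : ℤ)) := by
  ext ⟨u₁, u₂⟩ ⟨v₁, v₂⟩
  obtain ⟨p, hp⟩ := h₁.exists_walk_length_eq_dist u₁ v₁
  obtain ⟨q, hq⟩ := h₂.exists_walk_length_eq_dist u₂ v₂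
  have hdist : (G₁ □ G₂).dist (u₁, u₂) (v₁, v₂) = G₁.dist u₁ v₁ + G₂.dist u₂ v₂ :=
    boxProd_dist h₁ h₂ _ _
  set P : (G₁ □ G₂).Walk (u₁, u₂) (v₁, v₂) :=
    (p.boxProdLeft G₂ u₂).append (q.boxProdRight G₁ v₁) with hPdef
  have hPlen : P.length = (G₁ □ G₂).dist (u₁, u₂) (v₁, v₂) := by
    rw [hPdef, Walk.length_append, show (p.boxProdLeft G₂ u₂).length = p.length from Walk.length_map _ _,
      show (q.boxProdRight G₁ v₁).length = q.length from Walk.length_map _ _]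
    simp [Walk.boxProdLeft, Walk.boxProdRight, hp, hq, hdist]
  have hsign : sP (u₁, u₂) (v₁, v₂) = s₁ u₁ v₁ * s₂ u₂ v₂ := by
    rw [← hsP _ _ P hPlen, hPdef, walkSign_append, walkSign_boxProdLeft,
      walkSign_boxProdRight, hs₁ _ _ p hp, hs₂ _ _ q hq]
  simp only [Matrix.add_apply, Matrix.kroneckerMap_apply, Matrix.of_apply, hdist, hsign]
  push_cast
  ring
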